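/- arXiv:1304.7840 — 3 statements merged into one kernel-verified Lean document; each statement's English description precedes it below -/
import Mathlib

section
/- Let Φ be a crystallographic root system with base Δ, Weyl group W, and let 𝔥 ⊆ Φ⁺ be a Hessenberg set (the complement of an ideal of Φ⁺ in the root order). The GKM ring H_T*(𝔥) = { P : W → ℝ[Δ] : P(w) − P(s_α w) ∈ ⟨α⟩ for every edge w → s_α w of Γ_𝔥 } is stable under the dot action of W defined by (w · P)(u) = w(P(w⁻¹u)). -/
open scoped RealInnerProductSpace Pointwise

noncomputable section

/-- Euclidean `n`-space, the ambient space of the root system. -/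
abbrev EV (n : ℕ) := EuclideanSpace ℝ (Fin n)

/-- The (orthogonal) reflection in the hyperplane orthogonal to `α`. -/
def sRefl {n : ℕ} (α : EV n) : EV n ≃ₗᵢ[ℝ] EV n :=
  Submodule.reflection ((ℝ ∙ α)ᗮ)

/-- A finite crystallographic root system in `ℝⁿ`, together with a choice of
positive roots and a base of simple roots. -/
structure BasedRootSystem (n : ℕ) where
  /-- the set of roots -/
  Φ : Set (EV n)
  /-- the positive roots -/
  pos : Set (EV n)
  /-- the base of simple roots -/
  Δ : Set (EV n)
  finite : Φ.Finite
  nonzero : ∀ α ∈ Φ, α ≠ 0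
  reduced : ∀ α ∈ Φ, ∀ c : ℝ, c • α ∈ Φ → c = 1 ∨ c = -1
  reflect_mem : ∀ α ∈ Φ, ∀ β ∈ Φ, sRefl α β ∈ Φ
  cartan_int : ∀ α ∈ Φ, ∀ β ∈ Φ, ∃ m : ℤ, (m : ℝ) = 2 * ⟪α, β⟫ / ⟪α, α⟫
  pos_sub : pos ⊆ Φ
  pos_union : Φ = pos ∪ (-pos)
  pos_disj : pos ∩ (-pos) = ∅
  Δ_sub : Δ ⊆ pos
  Δ_indep : LinearIndependent ℝ ((↑) : Δ → EV n)
  Δ_span : Submodule.span ℝ Δ = ⊤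
  pos_combo : ∀ α ∈ pos, α ∈ AddSubmonoid.closure Δ

namespace BasedRootSystem

variable {n : ℕ} (R : BasedRootSystem n)

/-- The root order: `α ≺ β` iff `β - α` is a nonempty sum of positive roots. -/
def prec (a b : EV n) : Prop :=
  a ≠ b ∧ b - a ∈ AddSubmonoid.closure R.pos

/-- An ideal of the positive roots: upward closed for the root order. -/
def IsIdeal (I : Set (EV n)) : Prop :=
  I ⊆ R.pos ∧ ∀ β ∈ I, ∀ α ∈ R.pos, R.prec β α → α ∈ I

/-- A Hessenberg set: the complement in `Φ⁺` of an ideal. -/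
def IsHess (h : Set (EV n)) : Prop :=
  h ⊆ R.pos ∧ R.IsIdeal (R.pos \ h)

/-- The Weyl group, generated by the reflections in the roots. -/
def Weyl : Subgroup (EV n ≃ₗᵢ[ℝ] EV n) :=
  Subgroup.closure {g | ∃ α ∈ R.Φ, g = sRefl α}

/-- Application of a Weyl group element to a vector. -/
def ap (w : R.Weyl) (x : EV n) : EV n := (w : EV n ≃ₗᵢ[ℝ] EV n) x

/-- The inversion set `N_w = {α ∈ Φ⁺ : w⁻¹ α ∈ Φ⁻}`. -/
def N (w : R.Weyl) : Set (EV n) := {α | α ∈ R.pos ∧ R.ap w⁻¹ α ∈ -R.pos}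

/-- The length of a Weyl group element, `ℓ(w) = |N_w|`. -/
def len (w : R.Weyl) : ℕ := (R.N w).ncard

/-- The `𝔥`-inversion set `N_w^𝔥 = {α ∈ Φ⁺ : w⁻¹ α ∈ -𝔥}`. -/
def Nh (h : Set (EV n)) (w : R.Weyl) : Set (EV n) :=
  {α | α ∈ R.pos ∧ R.ap w⁻¹ α ∈ -h}

/-- `ℓ_𝔥(w) = |N_w^𝔥|`, the number of Hessenberg edges ending at `w`. -/
def lenh (h : Set (EV n)) (w : R.Weyl) : ℕ := (R.Nh h w).ncard

/-- `v` covers `w` in Bruhat order: `v = s_α w` with `ℓ(v) = ℓ(w) + 1`. -/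
def Covers (v w : R.Weyl) : Prop :=
  ∃ α ∈ R.pos, (v : EV n ≃ₗᵢ[ℝ] EV n) = sRefl α * (w : EV n ≃ₗᵢ[ℝ] EV n) ∧
    R.len v = R.len w + 1

/-- Bruhat order: the transitive closure of the relations `w < s_α w`
whenever the length increases. -/
def bruhatLt (w v : R.Weyl) : Prop :=
  Relation.TransGen (fun u u' : R.Weyl =>
    ∃ α ∈ R.pos, (u' : EV n ≃ₗᵢ[ℝ] EV n) = sRefl α * (u : EV n ≃ₗᵢ[ℝ] EV n) ∧
      R.len u < R.len u') w v

/-- The edge relation of the Hessenberg graph `Γ_𝔥`: `u → w` when `w = s_α u`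
with `α ∈ Φ⁺` and `w⁻¹ α ∈ -𝔥`. -/
def Edge (h : Set (EV n)) (u w : R.Weyl) : Prop :=
  ∃ α ∈ R.pos, (w : EV n ≃ₗᵢ[ℝ] EV n) = sRefl α * (u : EV n ≃ₗᵢ[ℝ] EV n) ∧
    R.ap w⁻¹ α ∈ -h

/-- The flow-up (reachability) order of the Hessenberg graph. -/
def flowLe (h : Set (EV n)) (x y : R.Weyl) : Prop :=
  Relation.ReflTransGen (R.Edge h) x y

/-- The strict flow-up order. -/
def flowLt (h : Set (EV n)) (x y : R.Weyl) : Prop :=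
  Relation.TransGen (R.Edge h) x y

/-- The linear polynomial in `ℝ[Δ] = ℝ[x₁,…,xₙ]` corresponding to a vector. -/
def lin (α : EV n) : MvPolynomial (Fin n) ℝ :=
  ∑ i, MvPolynomial.C (α i) * MvPolynomial.X i

/-- The action of an isometry `w` on the polynomial ring, induced by the
linear action on the ambient space: it sends `lin α` to `lin (w α)`. -/
def polyAct (w : EV n ≃ₗᵢ[ℝ] EV n) :
    MvPolynomial (Fin n) ℝ →ₐ[ℝ] MvPolynomial (Fin n) ℝ :=
  MvPolynomial.aeval fun i => lin (w (EuclideanSpace.single i 1))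

/-- The dot action of the Weyl group on `Maps(W, ℝ[Δ])`:
`(w · P)(u) = w (P (w⁻¹ u))`. -/
def dot (w : R.Weyl) (P : R.Weyl → MvPolynomial (Fin n) ℝ) :
    R.Weyl → MvPolynomial (Fin n) ℝ :=
  fun u => polyAct (w : EV n ≃ₗᵢ[ℝ] EV n) (P (w⁻¹ * u))

/-- Membership in the GKM ring `H_T^*(𝔥)`: the GKM conditions
`P(w) - P(s_α w) ∈ ⟨α⟩` along all edges of `Γ_𝔥`. -/
def GKM (h : Set (EV n)) (P : R.Weyl → MvPolynomial (Fin n) ℝ) : Prop :=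
  ∀ u w : R.Weyl, ∀ α ∈ R.pos,
    (w : EV n ≃ₗᵢ[ℝ] EV n) = sRefl α * (u : EV n ≃ₗᵢ[ℝ] EV n) →
    R.ap w⁻¹ α ∈ -h → P w - P u ∈ Ideal.span {lin α}

/-- The product `∏_{α ∈ S} α` (over `S ∩ Φ`) as an element of `ℝ[Δ]`. -/
def prodRoots (S : Set (EV n)) : MvPolynomial (Fin n) ℝ :=
  ∏ α ∈ (R.finite.inter_of_right S).toFinset, lin α

/-- A flow-up class at `x`: homogeneous of degree `ℓ_𝔥(x)`, with
`P(x) = ∏_{α ∈ N_x^𝔥} α`, supported on the flow-up of `x`, and satisfying the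
GKM conditions. -/
def IsFlowUp (h : Set (EV n)) (x : R.Weyl)
    (P : R.Weyl → MvPolynomial (Fin n) ℝ) : Prop :=
  R.GKM h P ∧ (∀ y, (P y).IsHomogeneous (R.lenh h x)) ∧
    P x = R.prodRoots (R.Nh h x) ∧ ∀ y, P y ≠ 0 → R.flowLe h x y

/-- Irreducibility: the roots admit no splitting into two nonempty mutually
orthogonal parts. -/
def IsIrreducible : Prop :=
  ∀ Ψ Ψ' : Set (EV n), Ψ ∪ Ψ' = R.Φ → (∀ a ∈ Ψ, ∀ b ∈ Ψ', ⟪a, b⟫ = 0) →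
    Ψ = ∅ ∨ Ψ' = ∅

/-- `γ` is the highest root: `α ⪯ γ` for every root `α`. -/
def IsHighest (γ : EV n) : Prop :=
  γ ∈ R.pos ∧ ∀ α ∈ R.Φ, α = γ ∨ R.prec α γ

end BasedRootSystem


namespace GKMAux

open BasedRootSystem

variable {n : ℕ}

lemma orth_map (g : EV n ≃ₗᵢ[ℝ] EV n) (v : EV n) :
    ((ℝ ∙ v)ᗮ).map (g.toLinearEquiv : EV n →ₗ[ℝ] EV n) = (ℝ ∙ (g v))ᗮ := by
  ext x
  simp only [Submodule.mem_map, Submodule.mem_orthogonal_singleton_iff_inner_right]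
  constructor
  · rintro ⟨y, hy, rfl⟩
    simpa [g.inner_map_map] using hy
  · intro hx
    refine ⟨g.symm x, ?_, by simp⟩
    rw [← g.inner_map_map]
    simpa using hx

lemma reflection_congr (K K' : Submodule ℝ (EV n)) (h : K = K')
    [Submodule.HasOrthogonalProjection K] [Submodule.HasOrthogonalProjection K'] :
    Submodule.reflection K = Submodule.reflection K' := by subst h; rfl

lemma sRefl_conj (g : EV n ≃ₗᵢ[ℝ] EV n) (v : EV n) (x : EV n) :
    sRefl (g v) x = g (sRefl v (g.symm x)) := by
  rw [sRefl, reflection_congr _ _ (orth_map g v).symm, Submodule.reflection_map_apply]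
  rfl

lemma sRefl_conj' (g : EV n ≃ₗᵢ[ℝ] EV n) (v : EV n) :
    sRefl (g v) = g * sRefl v * g⁻¹ := by
  refine LinearIsometryEquiv.ext fun x => ?_
  simp only [LinearIsometryEquiv.coe_mul, LinearIsometryEquiv.coe_inv, Function.comp_apply]
  exact sRefl_conj g v x

lemma sRefl_self (v : EV n) : sRefl v v = -v :=
  Submodule.reflection_mem_subspace_orthogonal_precomplement_eq_neg
    (Submodule.mem_span_singleton_self v)

lemma sRefl_mul_self (v : EV n) : sRefl v * sRefl v = 1 := by
  refine LinearIsometryEquiv.ext fun x => ?_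
  simp only [LinearIsometryEquiv.coe_mul, Function.comp_apply, LinearIsometryEquiv.coe_one,
    id_eq]
  exact Submodule.reflection_reflection _ x

lemma sRefl_inv (v : EV n) : (sRefl v)⁻¹ = sRefl v :=
  inv_eq_of_mul_eq_one_right (sRefl_mul_self v)

lemma sRefl_neg (v : EV n) : sRefl (-v) = sRefl v := by
  unfold sRefl
  exact reflection_congr ((ℝ ∙ (-v))ᗮ) ((ℝ ∙ v)ᗮ)
    (by rw [show ({-v} : Set (EV n)) = -{v} from (Set.neg_singleton v).symm, Submodule.span_neg])

lemma lin_add (a b : EV n) : lin (a + b) = lin a + lin b := by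
  simp [lin, PiLp.add_apply, map_add, add_mul, Finset.sum_add_distrib]

lemma lin_smul (c : ℝ) (a : EV n) :
    lin (c • a) = MvPolynomial.C c * lin a := by
  simp [lin, PiLp.smul_apply, smul_eq_mul, map_mul, Finset.mul_sum, mul_assoc]

lemma lin_neg (a : EV n) : lin (-a) = - lin a := by
  have := lin_smul (-1 : ℝ) a
  simpa using this

/-- `lin` as a linear map. -/
noncomputable def linL : EV n →ₗ[ℝ] MvPolynomial (Fin n) ℝ :=
  IsLinearMap.mk' lin ⟨lin_add, fun c a => by
    rw [lin_smul, Algebra.smul_def, MvPolynomial.algebraMap_eq]⟩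

lemma decomp (v : EV n) : ∑ i, v i • EuclideanSpace.single i (1:ℝ) = v := by
  have := (EuclideanSpace.basisFun (Fin n) ℝ).sum_repr v
  simpa [EuclideanSpace.basisFun_apply, EuclideanSpace.basisFun_repr] using this

lemma polyAct_lin (g : EV n ≃ₗᵢ[ℝ] EV n) (v : EV n) :
    polyAct g (lin v) = lin (g v) := by
  have h1 : g v = ∑ i, v i • g (EuclideanSpace.single i 1) := by
    conv_lhs => rw [← decomp v]
    rw [map_sum]
    simp
  rw [h1, lin, map_sum, show (lin (∑ i, v i • g (EuclideanSpace.single i 1)))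
    = linL (∑ i, v i • g (EuclideanSpace.single i 1)) from rfl, map_sum]
  refine Finset.sum_congr rfl fun i _ => ?_
  simp only [map_mul, polyAct, MvPolynomial.aeval_C, MvPolynomial.aeval_X, map_smul, linL,
    IsLinearMap.mk'_apply, MvPolynomial.smul_eq_C_mul]
  simp [MvPolynomial.algebraMap_eq]

/-- The Weyl group preserves the set of roots. -/
lemma weyl_maps_roots (R : BasedRootSystem n) (w : R.Weyl) {x : EV n} (hx : x ∈ R.Φ) :
    R.ap w x ∈ R.Φ := by
  obtain ⟨g, hg⟩ := w
  have key : ∀ x ∈ R.Φ, g x ∈ R.Φ := by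
    induction hg using Subgroup.closure_induction with
    | mem g hg =>
      obtain ⟨α, hα, rfl⟩ := hg
      exact fun x hx => R.reflect_mem α hα x hx
    | one => simpa using fun x hx => hx
    | mul a b ha hb iha ihb =>
      intro x hx
      rw [LinearIsometryEquiv.coe_mul, Function.comp_apply]
      exact iha _ (ihb x hx)
    | inv a ha iha =>
      have himg : (fun y => a y) '' R.Φ = R.Φ := by
        refine Set.eq_of_subset_of_ncard_le ?_ ?_ R.finite
        · rintro _ ⟨y, hy, rfl⟩
          exact iha y hy
        · rw [Set.ncard_image_of_injective _ a.injective]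
      intro x hx
      rw [← himg] at hx
      obtain ⟨y, hy, hxy⟩ := hx
      have : a⁻¹ x = y := by
        rw [← hxy, LinearIsometryEquiv.coe_inv]
        exact a.symm_apply_apply y
      rw [this]
      exact hy
  exact key x hx

end GKMAux

open BasedRootSystem GKMAux in
/-- The GKM ring `H_T^*(𝔥)` is stable under the dot action of the Weyl group. -/
theorem gkm_dot_stable {n : ℕ} (R : BasedRootSystem n) (h : Set (EV n))
    (hh : R.IsHess h) (w : R.Weyl) (P : R.Weyl → MvPolynomial (Fin n) ℝ)
    (hP : R.GKM h P) : R.GKM h (R.dot w P) := by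
  intro u' w' α hα hrel hmem
  have hcoe : ∀ a b : R.Weyl, ((a * b : R.Weyl) : EV n ≃ₗᵢ[ℝ] EV n)
      = (a : EV n ≃ₗᵢ[ℝ] EV n) * (b : EV n ≃ₗᵢ[ℝ] EV n) := fun a b => rfl
  have hcoeinv : ∀ a : R.Weyl, ((a⁻¹ : R.Weyl) : EV n ≃ₗᵢ[ℝ] EV n)
      = (a : EV n ≃ₗᵢ[ℝ] EV n)⁻¹ := fun a => rfl
  set g : EV n ≃ₗᵢ[ℝ] EV n := (w : EV n ≃ₗᵢ[ℝ] EV n) with hg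
  set β : EV n := g.symm α with hβdef
  have hgβ : g β = α := g.apply_symm_apply α
  have hβΦ : β ∈ R.Φ := by
    have h1 : R.ap w⁻¹ α ∈ R.Φ := weyl_maps_roots R w⁻¹ (R.pos_sub hα)
    have h2 : R.ap w⁻¹ α = β := by
      show ((w⁻¹ : R.Weyl) : EV n ≃ₗᵢ[ℝ] EV n) α = β
      rw [hcoeinv, LinearIsometryEquiv.coe_inv]
    rwa [h2] at h1
  set u2 : R.Weyl := w⁻¹ * u' with hu2
  set w2 : R.Weyl := w⁻¹ * w' with hw2
  have hval : (w2 : EV n ≃ₗᵢ[ℝ] EV n) = sRefl β * (u2 : EV n ≃ₗᵢ[ℝ] EV n) := by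
    rw [hw2, hu2, hcoe, hcoe, hcoeinv, hrel, ← hgβ, sRefl_conj']
    rw [hg]
    group
  have hw2inv : ((w2⁻¹ : R.Weyl) : EV n ≃ₗᵢ[ℝ] EV n)
      = (w' : EV n ≃ₗᵢ[ℝ] EV n)⁻¹ * g := by
    rw [hcoeinv, hw2, hcoe, hcoeinv, mul_inv_rev, inv_inv]
  have hu2inv : ((u2⁻¹ : R.Weyl) : EV n ≃ₗᵢ[ℝ] EV n)
      = (u' : EV n ≃ₗᵢ[ℝ] EV n)⁻¹ * g := by
    rw [hcoeinv, hu2, hcoe, hcoeinv, mul_inv_rev, inv_inv]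
  have hu'inv : (u' : EV n ≃ₗᵢ[ℝ] EV n)⁻¹ = (w' : EV n ≃ₗᵢ[ℝ] EV n)⁻¹ * sRefl α := by
    rw [hrel, mul_inv_rev, sRefl_inv, mul_assoc, sRefl_mul_self, mul_one]
  rw [R.pos_union] at hβΦ
  have key : P w2 - P u2 ∈ Ideal.span {lin β} := by
    rcases hβΦ with hb | hb
    · refine hP u2 w2 β hb hval ?_
      show ((w2⁻¹ : R.Weyl) : EV n ≃ₗᵢ[ℝ] EV n) β ∈ -h
      rw [hw2inv, LinearIsometryEquiv.coe_mul, Function.comp_apply, hgβ]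
      exact hmem
    · have hb' : -β ∈ R.pos := by rwa [Set.mem_neg] at hb
      have hval2 : (u2 : EV n ≃ₗᵢ[ℝ] EV n) = sRefl (-β) * (w2 : EV n ≃ₗᵢ[ℝ] EV n) := by
        rw [sRefl_neg, hval, ← mul_assoc, sRefl_mul_self, one_mul]
      have hap2 : R.ap u2⁻¹ (-β) ∈ -h := by
        show ((u2⁻¹ : R.Weyl) : EV n ≃ₗᵢ[ℝ] EV n) (-β) ∈ -h
        rw [hu2inv, hu'inv, LinearIsometryEquiv.coe_mul, Function.comp_apply, map_neg, hgβ,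
          LinearIsometryEquiv.coe_mul, Function.comp_apply, map_neg, sRefl_self, neg_neg]
        exact hmem
      have h3 := hP w2 u2 (-β) hb' hval2 hap2
      rw [lin_neg, Ideal.span_singleton_neg] at h3
      have h4 := neg_mem h3
      rwa [neg_sub] at h4
  obtain ⟨c, hc⟩ := Ideal.mem_span_singleton.mp key
  rw [Ideal.mem_span_singleton]
  have hd : R.dot w P w' - R.dot w P u' = polyAct g (P w2 - P u2) := by
    rw [map_sub]
    rfl
  rw [hd, hc, map_mul, polyAct_lin, hgβ]
  exact Dvd.intro _ rfl
end
end

section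
/- Let Φ be a crystallographic root system with Hessenberg set 𝔥 ⊆ Φ⁺. Suppose v = s_α w covers w in Bruhat order and β ∈ N_w ∩ s_α Φ⁻. Then v⁻¹β ≺ w⁻¹β in the root order; consequently, if β ∈ N_v^𝔥, then β ∈ N_w^𝔥. -/
open scoped RealInnerProductSpace Pointwise

noncomputable section

namespace BasedRootSystem

variable {n : ℕ} (R : BasedRootSystem n)

/-- The simple roots as a basis. -/
def bb : Module.Basis R.Δ ℝ (EV n) :=
  Module.Basis.mk R.Δ_indep (by rw [Subtype.range_coe, R.Δ_span])

/-- A linear functional positive on positive roots. -/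
def ff : EV n →ₗ[ℝ] ℝ := R.bb.sumCoords

lemma sRefl_formula (α x : EV n) :
    sRefl α x = x - (2 * ⟪α, x⟫ / ⟪α, α⟫) • α := by
  rw [sRefl, Submodule.reflection_apply, Submodule.starProjection_orthogonal_val,
    Submodule.starProjection_singleton, real_inner_self_eq_norm_sq]
  simp only [RCLike.ofReal_real_eq_id, id_eq]
  module

lemma sRefl_sRefl (α x : EV n) : sRefl α (sRefl α x) = x :=
  Submodule.reflection_involutive _ x

lemma sRefl_inv (α : EV n) : (sRefl α)⁻¹ = sRefl α := by
  rw [LinearIsometryEquiv.inv_def, sRefl, Submodule.reflection_symm]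

lemma ff_delta {δ : EV n} (hδ : δ ∈ R.Δ) : R.ff δ = 1 := by
  have h : δ = R.bb ⟨δ, hδ⟩ := by rw [bb, Module.Basis.mk_apply]
  rw [ff, h, Module.Basis.sumCoords_self_apply]

lemma ff_closure {x : EV n} (hx : x ∈ AddSubmonoid.closure R.Δ) :
    x = 0 ∨ 0 < R.ff x := by
  induction hx using AddSubmonoid.closure_induction with
  | mem y hy => exact Or.inr (by rw [R.ff_delta hy]; norm_num)
  | zero => exact Or.inl rfl
  | add a b ha hb iha ihb =>
    rcases iha with h1 | h1 <;> rcases ihb with h2 | h2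
    · left; rw [h1, h2, add_zero]
    · right; rw [map_add, h1, map_zero, zero_add]; exact h2
    · right; rw [map_add, h2, map_zero, add_zero]; exact h1
    · right; rw [map_add]; linarith

lemma ff_pos {x : EV n} (hx : x ∈ R.pos) : 0 < R.ff x := by
  rcases R.ff_closure (R.pos_combo x hx) with h0 | h0
  · exact absurd h0 (R.nonzero x (R.pos_sub hx))
  · exact h0

lemma ff_neg {x : EV n} (hx : x ∈ -R.pos) : R.ff x < 0 := by
  have h := R.ff_pos (Set.mem_neg.mp hx)
  rw [map_neg] at h; linarith

lemma not_pos_and_neg {x : EV n} (h1 : x ∈ R.pos) (h2 : x ∈ -R.pos) : False :=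
  Set.eq_empty_iff_forall_notMem.mp R.pos_disj x ⟨h1, h2⟩

lemma neg_of_ff {x : EV n} (hx : x ∈ R.Φ) (hf : R.ff x < 0) : x ∈ -R.pos := by
  rcases R.pos_union ▸ hx with h | h
  · exact absurd (R.ff_pos h) (by linarith)
  · exact h

lemma cpos {α μ : EV n} (hα : α ∈ R.pos) (hμ : μ ∈ R.pos)
    (h : sRefl α μ ∈ -R.pos) : 0 < 2 * ⟪α, μ⟫ / ⟪α, α⟫ := by
  have h1 := R.ff_pos hα
  have h2 := R.ff_pos hμ
  have h3 := R.ff_neg h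
  rw [sRefl_formula, map_sub, map_smul, smul_eq_mul] at h3
  nlinarith

lemma weyl_img : ∀ g ∈ R.Weyl, g '' R.Φ = R.Φ := by
  intro g hg
  induction hg using Subgroup.closure_induction with
  | mem x hx =>
    obtain ⟨α, hα, rfl⟩ := hx
    apply Set.Subset.antisymm
    · rintro _ ⟨y, hy, rfl⟩; exact R.reflect_mem α hα y hy
    · intro y hy
      exact ⟨sRefl α y, R.reflect_mem α hα y hy, sRefl_sRefl α y⟩
  | one => simp
  | mul a b ha hb iha ihb =>
    rw [LinearIsometryEquiv.coe_mul, Set.image_comp, ihb, iha]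
  | inv a ha iha =>
    conv_lhs => rw [← iha]
    rw [LinearIsometryEquiv.inv_def, ← Set.image_comp]
    simp [Function.comp_def]

lemma ap_mem (g : R.Weyl) {x : EV n} (hx : x ∈ R.Φ) : R.ap g x ∈ R.Φ := by
  have h := R.weyl_img (g : EV n ≃ₗᵢ[ℝ] EV n) g.2
  rw [← h]
  exact ⟨x, hx, rfl⟩

lemma ap_inv_eq (v w : R.Weyl) (α : EV n)
    (hv : (v : EV n ≃ₗᵢ[ℝ] EV n) = sRefl α * (w : EV n ≃ₗᵢ[ℝ] EV n)) (x : EV n) :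
    R.ap v⁻¹ x = R.ap w⁻¹ (sRefl α x) := by
  simp only [ap, InvMemClass.coe_inv, hv, mul_inv_rev, sRefl_inv,
    LinearIsometryEquiv.coe_mul, Function.comp_apply]

lemma winv_pos (v w : R.Weyl) (α : EV n) (hα : α ∈ R.pos)
    (hv : (v : EV n ≃ₗᵢ[ℝ] EV n) = sRefl α * (w : EV n ≃ₗᵢ[ℝ] EV n))
    (hlen : R.len v = R.len w + 1) : R.ap w⁻¹ α ∈ R.pos := by
  classical
  by_contra hneg'
  have hαΦ : α ∈ R.Φ := R.pos_sub hα
  have hneg : R.ap w⁻¹ α ∈ -R.pos := by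
    rcases R.pos_union ▸ R.ap_mem w⁻¹ hαΦ with hp | hp
    · exact absurd hp hneg'
    · exact hp
  have hsαα : sRefl α α = -α := by
    rw [sRefl_formula]
    have h0 : ⟪α, α⟫ ≠ 0 := inner_self_ne_zero.mpr (R.nonzero α hαΦ)
    rw [mul_div_assoc, div_self h0, mul_one]
    module
  set F : EV n → EV n := fun μ => if sRefl α μ ∈ R.pos then sRefl α μ else μ with hF
  have himg : ∀ μ ∈ R.N v, F μ ∈ R.N w \ {α} := by
    rintro μ ⟨hμp, hμv⟩
    have hμΦ : μ ∈ R.Φ := R.pos_sub hμp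
    have hv' : R.ap w⁻¹ (sRefl α μ) ∈ -R.pos := by
      rw [← R.ap_inv_eq v w α hv]; exact hμv
    by_cases hc : sRefl α μ ∈ R.pos
    · refine ⟨?_, ?_⟩
      · simp only [hF, if_pos hc]; exact ⟨hc, hv'⟩
      · simp only [hF, if_pos hc, Set.mem_singleton_iff]
        intro heq
        have hμeq : μ = -α := by
          have := congrArg (sRefl α) heq
          rwa [sRefl_sRefl, hsαα] at this
        exact R.not_pos_and_neg hμp (by rw [hμeq]; simpa using hα)
    · have hcneg : sRefl α μ ∈ -R.pos := by
        rcases R.pos_union ▸ R.reflect_mem α hαΦ μ hμΦ with hp | hp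
        · exact absurd hp hc
        · exact hp
      have hc2 : 0 < 2 * ⟪α, μ⟫ / ⟪α, α⟫ := R.cpos hα hμp hcneg
      have key : R.ap w⁻¹ μ =
          R.ap w⁻¹ (sRefl α μ) + (2 * ⟪α, μ⟫ / ⟪α, α⟫) • R.ap w⁻¹ α := by
        simp only [ap, sRefl_formula, map_sub, map_smul]
        abel
      have hfneg : R.ff (R.ap w⁻¹ μ) < 0 := by
        rw [key, map_add, map_smul, smul_eq_mul]
        have hn1 := R.ff_neg hv'
        have hn2 := R.ff_neg hneg
        nlinarith
      have hμw : R.ap w⁻¹ μ ∈ -R.pos := R.neg_of_ff (R.ap_mem w⁻¹ hμΦ) hfneg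
      refine ⟨?_, ?_⟩
      · simp only [hF, if_neg hc]; exact ⟨hμp, hμw⟩
      · simp only [hF, if_neg hc, Set.mem_singleton_iff]
        intro heq
        subst heq
        rw [hsαα] at hv'
        have hmn : R.ap w⁻¹ (-μ) = -R.ap w⁻¹ μ := by
          simp [BasedRootSystem.ap]
        rw [hmn] at hv'
        have hp' : R.ap w⁻¹ μ ∈ R.pos := by
          have h' := Set.mem_neg.mp hv'
          rwa [neg_neg] at h'
        exact R.not_pos_and_neg hp' hneg
  have hinj : Set.InjOn F (R.N v) := by
    rintro μ1 h1 μ2 h2 heq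
    by_cases c1 : sRefl α μ1 ∈ R.pos <;> by_cases c2 : sRefl α μ2 ∈ R.pos <;>
      simp only [hF, if_pos, if_neg, c1, c2, if_true, if_false] at heq
    · have := congrArg (sRefl α) heq
      rwa [sRefl_sRefl, sRefl_sRefl] at this
    · exfalso; apply c2
      rw [← heq, sRefl_sRefl]; exact h1.1
    · exfalso; apply c1
      rw [heq, sRefl_sRefl]; exact h2.1
    · exact heq
  have hNwfin : (R.N w).Finite := R.finite.subset fun x hx => R.pos_sub hx.1
  have hNvfin : (R.N v).Finite := R.finite.subset fun x hx => R.pos_sub hx.1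
  have hαNw : α ∈ R.N w := ⟨hα, hneg⟩
  have h1 : (R.N v).ncard = (F '' R.N v).ncard := (Set.ncard_image_of_injOn hinj).symm
  have h2 : (F '' R.N v).ncard ≤ (R.N w \ {α}).ncard :=
    Set.ncard_le_ncard (by rintro _ ⟨μ, hμ, rfl⟩; exact himg μ hμ) hNwfin.diff
  have h3 : (R.N w \ {α}).ncard = (R.N w).ncard - 1 :=
    Set.ncard_diff_singleton_of_mem hαNw
  have h4 : 0 < (R.N w).ncard := (Set.ncard_pos hNwfin).mpr ⟨α, hαNw⟩
  have hlv : R.len v = (R.N v).ncard := rfl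
  have hlw : R.len w = (R.N w).ncard := rfl
  omega

end BasedRootSystem

open BasedRootSystem in
/-- If `v = s_α w` covers `w` and `β ∈ N_w ∩ s_α Φ⁻`, then `v⁻¹β ≺ w⁻¹β` in the
root order; consequently `β ∈ N_v^𝔥` implies `β ∈ N_w^𝔥`. -/
theorem hinv_cover_case2 {n : ℕ} (R : BasedRootSystem n) (h : Set (EV n))
    (hh : R.IsHess h) (v w : R.Weyl) (α : EV n) (hα : α ∈ R.pos)
    (hv : (v : EV n ≃ₗᵢ[ℝ] EV n) = sRefl α * (w : EV n ≃ₗᵢ[ℝ] EV n))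
    (hlen : R.len v = R.len w + 1) (β : EV n)
    (hβ : β ∈ R.N w ∩ ⇑(sRefl α) '' (-R.pos)) :
    R.prec (R.ap v⁻¹ β) (R.ap w⁻¹ β) ∧ (β ∈ R.Nh h v → β ∈ R.Nh h w) := by
  obtain ⟨⟨hβpos, hwβ⟩, γ, hγ, hγβ⟩ := hβ
  have hαΦ : α ∈ R.Φ := R.pos_sub hα
  have hβΦ : β ∈ R.Φ := R.pos_sub hβpos
  have hsβ : sRefl α β ∈ -R.pos := by rw [← hγβ, sRefl_sRefl]; exact hγ
  have hc : 0 < 2 * ⟪α, β⟫ / ⟪α, α⟫ := R.cpos hα hβpos hsβ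
  have hwa : R.ap w⁻¹ α ∈ R.pos := R.winv_pos v w α hα hv hlen
  have key : R.ap w⁻¹ β - R.ap v⁻¹ β = (2 * ⟪α, β⟫ / ⟪α, α⟫) • R.ap w⁻¹ α := by
    rw [R.ap_inv_eq v w α hv]
    simp only [BasedRootSystem.ap, sRefl_formula, map_sub, map_smul]
    abel
  obtain ⟨m, hm⟩ := R.cartan_int α hαΦ β hβΦ
  have hmpos : 0 < m := by
    have : (0 : ℝ) < (m : ℝ) := by rw [hm]; exact hc
    exact_mod_cast this
  have hsmul : (2 * ⟪α, β⟫ / ⟪α, α⟫) • R.ap w⁻¹ α = m.toNat • R.ap w⁻¹ α := by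
    have hmt : ((m.toNat : ℕ) : ℝ) = (m : ℝ) := by
      exact_mod_cast congrArg (fun k : ℤ => (k : ℝ)) (Int.toNat_of_nonneg hmpos.le)
    rw [← hm, ← hmt]
    exact Nat.cast_smul_eq_nsmul ℝ _ _
  have hmem : R.ap w⁻¹ β - R.ap v⁻¹ β ∈ AddSubmonoid.closure R.pos := by
    rw [key, hsmul]
    exact nsmul_mem (AddSubmonoid.subset_closure hwa) m.toNat
  have hne : R.ap v⁻¹ β ≠ R.ap w⁻¹ β := by
    intro heq
    have h0 : (2 * ⟪α, β⟫ / ⟪α, α⟫) • R.ap w⁻¹ α = 0 := by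
      rw [← key, heq, sub_self]
    rcases smul_eq_zero.mp h0 with h0 | h0
    · exact hc.ne' h0
    · exact R.nonzero _ (R.pos_sub hwa) h0
  have hprec : R.prec (R.ap v⁻¹ β) (R.ap w⁻¹ β) := ⟨hne, hmem⟩
  refine ⟨hprec, ?_⟩
  rintro ⟨-, hvh⟩
  refine ⟨hβpos, ?_⟩
  by_contra hwh
  have hI : -R.ap w⁻¹ β ∈ R.pos \ h :=
    ⟨Set.mem_neg.mp hwβ, fun hmem' => hwh (Set.mem_neg.mpr hmem')⟩
  have hvhpos : -R.ap v⁻¹ β ∈ R.pos := hh.1 (Set.mem_neg.mp hvh)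
  have hprec2 : R.prec (-R.ap w⁻¹ β) (-R.ap v⁻¹ β) := by
    constructor
    · intro e
      exact hne (neg_injective e).symm
    · have habel : -R.ap v⁻¹ β - -R.ap w⁻¹ β = R.ap w⁻¹ β - R.ap v⁻¹ β := by abel
      rw [habel]; exact hmem
  have hcon := hh.2.2 _ hI _ hvhpos hprec2
  exact hcon.2 (Set.mem_neg.mp hvh)
end
end

section
/- Let Φ be an irreducible crystallographic root system with highest root γ and 𝔥_γ = Φ⁺ \ {γ}. For w ∈ W write ℓ_γ(w) = |N_w^{γ}| where N_w^{γ} = {α ∈ Φ⁺ : w⁻¹α ∈ −𝔥_γ}. Suppose v > w in Bruhat order. Then ℓ_γ(w) = ℓ_γ(v) if and only if: v covers w, N_w = N_w^{γ}, and there exists β ∈ N_v with v⁻¹β = −γ. -/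
open scoped RealInnerProductSpace Pointwise

noncomputable section

namespace BasedRootSystem

variable {n : ℕ} (R : BasedRootSystem n)

lemma ap_inv_ap (w : R.Weyl) (x : EV n) : R.ap w⁻¹ (R.ap w x) = x := by
  simp [ap]

lemma ap_ap_inv (w : R.Weyl) (x : EV n) : R.ap w (R.ap w⁻¹ x) = x := by
  simp [ap]

lemma N_finite (u : R.Weyl) : (R.N u).Finite :=
  R.finite.subset fun α hα => R.pos_sub hα.1

lemma Nh_diff (γ : EV n) (u : R.Weyl) :
    R.Nh (R.pos \ {γ}) u = R.N u \ {α | R.ap u⁻¹ α = -γ} := by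
  ext α
  simp only [Nh, N, Set.mem_setOf_eq, Set.mem_diff, Set.mem_neg, Set.mem_singleton_iff]
  constructor
  · rintro ⟨h1, h2, h3⟩
    refine ⟨⟨h1, h2⟩, fun h => h3 ?_⟩
    rw [h]; simp
  · rintro ⟨⟨h1, h2⟩, h3⟩
    refine ⟨h1, h2, fun h => h3 ?_⟩
    rw [neg_eq_iff_eq_neg] at h
    simpa using h

lemma Nh_of_not_mem (γ : EV n) (u : R.Weyl) (h : R.ap u (-γ) ∉ R.pos) :
    R.Nh (R.pos \ {γ}) u = R.N u := by
  rw [Nh_diff]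
  ext α
  simp only [Set.mem_diff, Set.mem_setOf_eq, and_iff_left_iff_imp]
  intro hN hα
  exact h (by rw [← hα, R.ap_ap_inv]; exact hN.1)

lemma Nh_of_mem (γ : EV n) (hγ : γ ∈ R.pos) (u : R.Weyl) (h : R.ap u (-γ) ∈ R.pos) :
    R.Nh (R.pos \ {γ}) u = R.N u \ {R.ap u (-γ)} ∧ R.ap u (-γ) ∈ R.N u := by
  have hm : R.ap u (-γ) ∈ R.N u := by
    refine ⟨h, ?_⟩
    rw [R.ap_inv_ap]
    simpa using hγ
  constructor
  · rw [Nh_diff]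
    congr 1
    ext α
    simp only [Set.mem_setOf_eq, Set.mem_singleton_iff]
    constructor
    · intro hα
      rw [← hα, R.ap_ap_inv]
    · intro hα
      rw [hα, R.ap_inv_ap]
  · exact hm

lemma bruhat_len_lt {w v : R.Weyl} (h : R.bruhatLt w v) : R.len w < R.len v := by
  induction h with
  | single h => obtain ⟨α, _, _, h⟩ := h; exact h
  | tail _ h ih => obtain ⟨α, _, _, h⟩ := h; exact ih.trans h

lemma bruhat_step {w v : R.Weyl} (h : R.bruhatLt w v) (hlen : R.len v = R.len w + 1) :
    ∃ α ∈ R.pos, (v : EV n ≃ₗᵢ[ℝ] EV n) = sRefl α * (w : EV n ≃ₗᵢ[ℝ] EV n) := by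
  cases h with
  | single h => obtain ⟨α, hα, he, _⟩ := h; exact ⟨α, hα, he⟩
  | tail h' hstep =>
      obtain ⟨α, _, _, hl⟩ := hstep
      have := R.bruhat_len_lt h'
      omega

end BasedRootSystem

open BasedRootSystem in
/-- For the highest root Hessenberg set `𝔥_γ = Φ⁺ \ {γ}` and `v > w` in Bruhat
order: `ℓ_γ(w) = ℓ_γ(v)` iff `v` covers `w`, `N_w = N_w^γ`, and there is
`β ∈ N_v` with `v⁻¹β = -γ`. -/
theorem lenh_eq_iff_cover {n : ℕ} (R : BasedRootSystem n)
    (hirr : R.IsIrreducible) (γ : EV n) (hγ : R.IsHighest γ)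
    (v w : R.Weyl) (hlt : R.bruhatLt w v) :
    R.lenh (R.pos \ {γ}) w = R.lenh (R.pos \ {γ}) v ↔
      (R.Covers v w ∧ R.N w = R.Nh (R.pos \ {γ}) w ∧
        ∃ β ∈ R.N v, R.ap v⁻¹ β = -γ) := by
  have hγpos : γ ∈ R.pos := hγ.1
  have hlt' := R.bruhat_len_lt hlt
  -- lenh for the two cases
  have lenh_not : ∀ u : R.Weyl, R.ap u (-γ) ∉ R.pos →
      R.lenh (R.pos \ {γ}) u = R.len u := by
    intro u hu
    unfold lenh len
    rw [R.Nh_of_not_mem γ u hu]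
  have lenh_mem : ∀ u : R.Weyl, R.ap u (-γ) ∈ R.pos →
      R.lenh (R.pos \ {γ}) u + 1 = R.len u := by
    intro u hu
    obtain ⟨he, hm⟩ := R.Nh_of_mem γ hγpos u hu
    unfold lenh len
    rw [he, Set.ncard_diff_singleton_of_mem hm]
    have : 0 < (R.N u).ncard := (Set.ncard_pos (R.N_finite u)).mpr ⟨_, hm⟩
    omega
  have exβ_iff : ∀ u : R.Weyl, (∃ β ∈ R.N u, R.ap u⁻¹ β = -γ) ↔ R.ap u (-γ) ∈ R.pos := by
    intro u
    constructor
    · rintro ⟨β, hβ, hβγ⟩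
      rw [← hβγ, R.ap_ap_inv]
      exact hβ.1
    · intro hu
      refine ⟨R.ap u (-γ), ⟨hu, ?_⟩, R.ap_inv_ap u (-γ)⟩
      rw [R.ap_inv_ap]
      simpa using hγpos
  constructor
  · intro heq
    -- first, `ap v (-γ) ∈ pos`
    have hv : R.ap v (-γ) ∈ R.pos := by
      by_contra hv
      have h1 := lenh_not v hv
      have h2 : R.lenh (R.pos \ {γ}) w ≤ R.len w := by
        unfold lenh len
        refine Set.ncard_le_ncard ?_ (R.N_finite w)
        rw [R.Nh_diff]
        exact Set.diff_subset
      omega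
    have h1 := lenh_mem v hv
    have hw : R.ap w (-γ) ∉ R.pos := by
      intro hw
      have h2 := lenh_mem w hw
      omega
    have h2 := lenh_not w hw
    have hlen : R.len v = R.len w + 1 := by omega
    obtain ⟨α, hα, he⟩ := R.bruhat_step hlt hlen
    refine ⟨⟨α, hα, he, hlen⟩, (R.Nh_of_not_mem γ w hw).symm, (exβ_iff v).mpr hv⟩
  · rintro ⟨⟨α, hα, he, hlen⟩, hNw, hβ⟩
    have hv : R.ap v (-γ) ∈ R.pos := (exβ_iff v).mp hβ
    have h1 := lenh_mem v hv
    have h2 : R.lenh (R.pos \ {γ}) w = R.len w := by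
      unfold lenh len
      rw [← hNw]
    omega
end
end
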